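/- With the notation of the context, the pair (𝒟_υ^{≤0}, 𝒟_υ^{≥0}) is a t-structure on 𝒟 (the tilted t-structure τ_υ obtained from τ by tilting at the torsion pair (𝒯, ℱ)): the classes are isomorphism-closed, 𝒟_υ^{≤0}[1] ⊆ 𝒟_υ^{≤0}, 𝒟_υ^{≥0}[-1] ⊆ 𝒟_υ^{≥0}, Hom_𝒟(X, Y) = 0 whenever X ∈ 𝒟_υ^{≤0} and Y ∈ 𝒟_υ^{≥0}[-1], and every object X of 𝒟 fits into a distinguished triangle A → X → B → A[1] with A ∈ 𝒟_υ^{≤0} and B ∈ 𝒟_υ^{≥0}[-1]. -/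

import Mathlib

open CategoryTheory CategoryTheory.Limits CategoryTheory.Pretriangulated

universe v u

variable (C : Type u) [Category.{v} C] [HasZeroObject C] [Preadditive C] [HasShift C ℤ]
  [∀ n : ℤ, (shiftFunctor C n).Additive] [Pretriangulated C]

/-- A t-structure on a pretriangulated category `C`, given by the two isomorphism-closed
classes `le` (the objects of `𝒟^{≤0}`) and `ge` (the objects of `𝒟^{≥0}`).  With the
convention that `X ∈ 𝒟^{≤n} ↔ le (X⟦n⟧)` and `X ∈ 𝒟^{≥n} ↔ ge (X⟦n⟧)`, the axioms read:
`𝒟^{≤-1} ⊆ 𝒟^{≤0}` (equivalently `𝒟^{≤0}[1] ⊆ 𝒟^{≤0}`), `𝒟^{≥1} ⊆ 𝒟^{≥0}` (equivalently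
`𝒟^{≥0}[-1] ⊆ 𝒟^{≥0}`), `Hom(X, Y) = 0` for `X ∈ 𝒟^{≤0}` and `Y ∈ 𝒟^{≥1}`, and every
object sits in a distinguished triangle `A → X → B → A[1]` with `A ∈ 𝒟^{≤0}`,
`B ∈ 𝒟^{≥1}`. -/
structure TStruct where
  /-- the class `𝒟^{≤0}` -/
  le : C → Prop
  /-- the class `𝒟^{≥0}` -/
  ge : C → Prop
  le_iso_closed : ∀ {X Y : C}, (X ≅ Y) → le X → le Y
  ge_iso_closed : ∀ {X Y : C}, (X ≅ Y) → ge X → ge Y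
  le_shift : ∀ X : C, le X → le (X⟦(1 : ℤ)⟧)
  ge_shift : ∀ X : C, ge X → ge (X⟦(-1 : ℤ)⟧)
  hom_vanish : ∀ {X Y : C}, le X → ge (Y⟦(1 : ℤ)⟧) → ∀ f : X ⟶ Y, f = 0
  exists_triangle : ∀ X : C, ∃ (A B : C) (f : A ⟶ X) (g : X ⟶ B) (h : B ⟶ A⟦(1 : ℤ)⟧),
    (Triangle.mk f g h ∈ distTriang C) ∧ le A ∧ ge (B⟦(1 : ℤ)⟧)

variable {C}

/-- The heart `𝒟^♥ = 𝒟^{≤0} ∩ 𝒟^{≥0}` of a t-structure. -/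
def TStruct.heart (t : TStruct C) (X : C) : Prop := t.le X ∧ t.ge X

/-- A torsion pair `(𝒯, ℱ)` on the heart of a t-structure: two isomorphism-closed classes
of objects of the heart such that `Hom(T, F) = 0` for `T ∈ 𝒯`, `F ∈ ℱ`, and every object
of the heart sits in a distinguished triangle `T → X → F → T[1]` with `T ∈ 𝒯`, `F ∈ ℱ`
(i.e. a short exact sequence `0 → T → X → F → 0` in the heart). -/
structure HeartTorsionPair (t : TStruct C) where
  /-- the torsion class -/
  torsion : C → Prop
  /-- the torsion-free class -/
  free : C → Prop
  torsion_mem_heart : ∀ X : C, torsion X → t.heart X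
  free_mem_heart : ∀ X : C, free X → t.heart X
  torsion_iso_closed : ∀ {X Y : C}, (X ≅ Y) → torsion X → torsion Y
  free_iso_closed : ∀ {X Y : C}, (X ≅ Y) → free X → free Y
  hom_vanish : ∀ {T F : C}, torsion T → free F → ∀ f : T ⟶ F, f = 0
  exists_triangle : ∀ X : C, t.heart X →
    ∃ (T F : C) (f : T ⟶ X) (g : X ⟶ F) (h : F ⟶ T⟦(1 : ℤ)⟧),
      (Triangle.mk f g h ∈ distTriang C) ∧ torsion T ∧ free F

/-- The connective part `𝒟_υ^{≤0}` of the tilting of a t-structure `t` with respect to a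
torsion class `torsion` on its heart: those `X ∈ 𝒟^{≤0}` fitting in a distinguished
triangle `A → X → T → A[1]` with `A ∈ 𝒟^{≤-1}` and `T` torsion. -/
def TiltLE (t : TStruct C) (torsion : C → Prop) (X : C) : Prop :=
  t.le X ∧ ∃ (A T : C) (f : A ⟶ X) (g : X ⟶ T) (h : T ⟶ A⟦(1 : ℤ)⟧),
    (Triangle.mk f g h ∈ distTriang C) ∧ t.le (A⟦(-1 : ℤ)⟧) ∧ torsion T

/-- The coconnective part `𝒟_υ^{≥0}` of the tilting of a t-structure `t` with respect to a
torsion-free class `free` on its heart: those `X ∈ 𝒟^{≥-1}` fitting in a distinguished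
triangle `F[1] → X → B → F[2]` with `F` torsion-free and `B ∈ 𝒟^{≥0}`. -/
def TiltGE (t : TStruct C) (free : C → Prop) (X : C) : Prop :=
  t.ge (X⟦(-1 : ℤ)⟧) ∧ ∃ (F B : C) (f : F⟦(1 : ℤ)⟧ ⟶ X) (g : X ⟶ B)
    (h : B ⟶ (F⟦(1 : ℤ)⟧)⟦(1 : ℤ)⟧),
    (Triangle.mk f g h ∈ distTriang C) ∧ free F ∧ t.ge B

section Auxiliary

open ZeroObject

/-- The canonical isomorphism `X⟦1⟧⟦-1⟧ ≅ X`. -/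
noncomputable def shNeg (X : C) : (X⟦(1 : ℤ)⟧)⟦(-1 : ℤ)⟧ ≅ X :=
  (shiftFunctorCompIsoId C (1 : ℤ) (-1 : ℤ) (by omega)).app X

/-- The canonical isomorphism `X⟦-1⟧⟦1⟧ ≅ X`. -/
noncomputable def shPos (X : C) : (X⟦(-1 : ℤ)⟧)⟦(1 : ℤ)⟧ ≅ X :=
  (shiftFunctorCompIsoId C (-1 : ℤ) (1 : ℤ) (by omega)).app X

lemma zero_of_shift (n : ℤ) {P Q : C} (h : ∀ g : P ⟶ Q, g = 0) (f : P⟦n⟧ ⟶ Q⟦n⟧) :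
    f = 0 := by
  obtain ⟨g, rfl⟩ := (shiftFunctor C n).map_surjective f
  rw [h g, Functor.map_zero]

lemma isZero_shift_iff (n : ℤ) (W : C) : IsZero (W⟦n⟧) ↔ IsZero W := by
  simp only [IsZero.iff_id_eq_zero]
  constructor
  · intro h
    apply (shiftFunctor C n).map_injective
    rw [CategoryTheory.Functor.map_id, Functor.map_zero, h]
  · intro h
    rw [← CategoryTheory.Functor.map_id, h, Functor.map_zero]

namespace TStruct

variable (t : TStruct C)

lemma le_unshift {X : C} (h : t.le (X⟦(-1 : ℤ)⟧)) : t.le X :=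
  t.le_iso_closed (shPos X) (t.le_shift _ h)

lemma ge_unshift {X : C} (h : t.ge (X⟦(1 : ℤ)⟧)) : t.ge X :=
  t.ge_iso_closed (shNeg X) (t.ge_shift _ h)

/-- Vanishing of maps from `𝒟^{≤-1}` to `𝒟^{≥0}`. -/
lemma vanish_neg {P Q : C} (hP : t.le (P⟦(-1 : ℤ)⟧)) (hQ : t.ge Q) (f : P ⟶ Q) : f = 0 := by
  apply (shiftFunctor C (-1 : ℤ)).map_injective
  rw [Functor.map_zero]
  exact t.hom_vanish hP (t.ge_iso_closed (shPos Q).symm hQ) _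

/-- A decomposition of any object at level `(-1, 0)` rather than `(0, 1)`. -/
lemma exists_triangle_neg (W : C) :
    ∃ (P Q : C) (α : P ⟶ W) (β : W ⟶ Q) (γ : Q ⟶ P⟦(1 : ℤ)⟧),
      (Triangle.mk α β γ ∈ distTriang C) ∧ t.le (P⟦(-1 : ℤ)⟧) ∧ t.ge Q := by
  obtain ⟨A', B', f', g', h', mem, hA', hB'⟩ := t.exists_triangle (W⟦(-1 : ℤ)⟧)
  have hTS : (Triangle.shiftFunctor C (1 : ℤ)).obj (Triangle.mk f' g' h') ∈ distTriang C :=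
    Triangle.shift_distinguished _ mem 1
  set TS := (Triangle.shiftFunctor C (1 : ℤ)).obj (Triangle.mk f' g' h') with hTSdef
  refine ⟨A'⟦(1 : ℤ)⟧, B'⟦(1 : ℤ)⟧, TS.mor₁ ≫ (shPos W).hom, (shPos W).inv ≫ TS.mor₂,
    TS.mor₃, ?_, t.le_iso_closed (shNeg A').symm hA', hB'⟩
  refine isomorphic_distinguished _ hTS _ ?_
  refine Triangle.isoMk _ _ (Iso.refl _) (shPos W).symm (Iso.refl _) ?_ ?_ ?_
  · exact ((Category.assoc _ _ _).trans ((congrArg _ (Iso.hom_inv_id _)).trans (Category.comp_id _))).trans (Category.id_comp _).symm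
  · exact Category.comp_id _
  · exact (congrArg _ (CategoryTheory.Functor.map_id _ _)).trans ((Category.comp_id _).trans (Category.id_comp _).symm)

/-- `𝒟^{≤0}` contains all zero objects. -/
lemma le_isZero {W : C} (hW : IsZero W) : t.le W := by
  obtain ⟨A, B, u, v, w, hT, hA, hB1⟩ := t.exists_triangle W
  have hu : u = 0 := hW.eq_of_tgt _ _
  obtain ⟨g, hg⟩ := Triangle.coyoneda_exact₁ _ hT (𝟙 (A⟦(1 : ℤ)⟧)) (by
    delta Triangle.mk; dsimp only
    rw [hu, Functor.map_zero, comp_zero])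
  have hg0 : g = 0 := t.hom_vanish (t.le_shift _ hA) hB1 g
  have hzA : IsZero A := (isZero_shift_iff (1 : ℤ) A).1 (by
    rw [IsZero.iff_id_eq_zero, hg, hg0, zero_comp]; rfl)
  exact t.le_iso_closed (hzA.isoZero.trans hW.isoZero.symm) hA

/-- `𝒟^{≥0}` contains all zero objects. -/
lemma ge_isZero {W : C} (hW : IsZero W) : t.ge W := by
  obtain ⟨A, B, u, v, w, hT, hA, hB1⟩ := t.exists_triangle W
  have hv : v = 0 := hW.eq_of_src _ _
  obtain ⟨g, hg⟩ := Triangle.yoneda_exact₃ _ hT (𝟙 B) (by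
    delta Triangle.mk; dsimp only
    rw [hv, zero_comp])
  have hg0 : g = 0 := t.hom_vanish (t.le_shift _ hA) hB1 g
  have hzB : IsZero B := by
    rw [IsZero.iff_id_eq_zero, hg, hg0, comp_zero]; rfl
  have hzB1 : IsZero (B⟦(1 : ℤ)⟧) := (isZero_shift_iff (1 : ℤ) B).2 hzB
  exact t.ge_iso_closed (hzB1.isoZero.trans hW.isoZero.symm) hB1

/-- An object with no maps to `𝒟^{≥1}` lies in `𝒟^{≤0}`. -/
lemma le_of_homZero {W : C}
    (hW : ∀ V : C, t.ge (V⟦(1 : ℤ)⟧) → ∀ f : W ⟶ V, f = 0) : t.le W := by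
  obtain ⟨A, B, u, v, w, hT, hA, hB1⟩ := t.exists_triangle W
  have hv : v = 0 := hW B hB1 v
  obtain ⟨g, hg⟩ := Triangle.yoneda_exact₃ _ hT (𝟙 B) (by
    delta Triangle.mk; dsimp only
    rw [hv, zero_comp])
  have hg0 : g = 0 := t.hom_vanish (t.le_shift _ hA) hB1 g
  have hzB : IsZero B := by
    rw [IsZero.iff_id_eq_zero, hg, hg0, comp_zero]; rfl
  have : IsIso (Triangle.mk u v w).mor₁ := (Triangle.isZero₃_iff_isIso₁ _ hT).1 hzB
  exact t.le_iso_closed (@asIso _ _ _ _ (Triangle.mk u v w).mor₁ this : A ≅ W) hA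

/-- An object receiving no maps from `𝒟^{≤-1}` lies in `𝒟^{≥0}`. -/
lemma ge_of_homZero {W : C}
    (hW : ∀ V : C, t.le (V⟦(-1 : ℤ)⟧) → ∀ f : V ⟶ W, f = 0) : t.ge W := by
  obtain ⟨P, Q, α, β, γ, hT, hP, hQ⟩ := t.exists_triangle_neg W
  have hα : α = 0 := hW P hP α
  obtain ⟨g, hg⟩ := Triangle.coyoneda_exact₁ _ hT (𝟙 (P⟦(1 : ℤ)⟧)) (by
    delta Triangle.mk; dsimp only
    rw [hα, Functor.map_zero, comp_zero])
  have hg0 : g = 0 :=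
    t.vanish_neg (t.le_iso_closed (shNeg P).symm (t.le_unshift hP)) hQ g
  have hzP : IsZero P := (isZero_shift_iff (1 : ℤ) P).1 (by
    rw [IsZero.iff_id_eq_zero, hg, hg0, zero_comp]; rfl)
  have : IsIso (Triangle.mk α β γ).mor₂ := (Triangle.isZero₁_iff_isIso₂ _ hT).1 hzP
  exact t.ge_iso_closed (asIso (Triangle.mk α β γ).mor₂).symm hQ

/-- `𝒟^{≤0}` is closed under extensions. -/
lemma le_ext {T : Triangle C} (hT : T ∈ distTriang C) (h₁ : t.le T.obj₁)
    (h₃ : t.le T.obj₃) : t.le T.obj₂ := by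
  apply t.le_of_homZero
  intro V hV f
  obtain ⟨g, hg⟩ := Triangle.yoneda_exact₂ _ hT f (t.hom_vanish h₁ hV _)
  rw [hg, t.hom_vanish h₃ hV g, comp_zero]

/-- `𝒟^{≥0}` is closed under extensions. -/
lemma ge_ext {T : Triangle C} (hT : T ∈ distTriang C) (h₁ : t.ge T.obj₁)
    (h₃ : t.ge T.obj₃) : t.ge T.obj₂ := by
  apply t.ge_of_homZero
  intro V hV f
  obtain ⟨g, hg⟩ := Triangle.coyoneda_exact₂ _ hT f (t.vanish_neg hV h₃ _)
  rw [hg, t.vanish_neg hV h₁ g, zero_comp]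

end TStruct

namespace HeartTorsionPair

variable {t : TStruct C} (tp : HeartTorsionPair t)

/-- The torsion class contains all zero objects. -/
lemma torsion_isZero {W : C} (hW : IsZero W) : tp.torsion W := by
  obtain ⟨T₀, F₀, i₀, s₀, e₀, hT, hTor, hFree⟩ :=
    tp.exists_triangle W ⟨t.le_isZero hW, t.ge_isZero hW⟩
  have hi : i₀ = 0 := hW.eq_of_tgt _ _
  obtain ⟨g, hg⟩ := Triangle.coyoneda_exact₁ _ hT (𝟙 (T₀⟦(1 : ℤ)⟧)) (by
    delta Triangle.mk; dsimp only
    rw [hi, Functor.map_zero, comp_zero])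
  have hg0 : g = 0 :=
    t.vanish_neg (t.le_iso_closed (shNeg T₀).symm (tp.torsion_mem_heart _ hTor).1)
      (tp.free_mem_heart _ hFree).2 g
  have hzT : IsZero T₀ := (isZero_shift_iff (1 : ℤ) T₀).1 (by
    rw [IsZero.iff_id_eq_zero, hg, hg0, zero_comp]; rfl)
  exact tp.torsion_iso_closed (hzT.isoZero.trans hW.isoZero.symm) hTor

/-- The torsion-free class contains all zero objects. -/
lemma free_isZero {W : C} (hW : IsZero W) : tp.free W := by
  obtain ⟨T₀, F₀, i₀, s₀, e₀, hT, hTor, hFree⟩ :=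
    tp.exists_triangle W ⟨t.le_isZero hW, t.ge_isZero hW⟩
  have hs : s₀ = 0 := hW.eq_of_src _ _
  obtain ⟨g, hg⟩ := Triangle.yoneda_exact₃ _ hT (𝟙 F₀) (by
    delta Triangle.mk; dsimp only
    rw [hs, zero_comp])
  have hg0 : g = 0 :=
    t.vanish_neg (t.le_iso_closed (shNeg T₀).symm (tp.torsion_mem_heart _ hTor).1)
      (tp.free_mem_heart _ hFree).2 g
  have hzF : IsZero F₀ := by
    rw [IsZero.iff_id_eq_zero, hg, hg0, comp_zero]; rfl
  exact tp.free_iso_closed (hzF.isoZero.trans hW.isoZero.symm) hFree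

/-- A heart object with no maps from the torsion class is torsion-free. -/
lemma free_of_homZero {H : C} (hH : t.heart H)
    (h : ∀ T' : C, tp.torsion T' → ∀ f : T' ⟶ H, f = 0) : tp.free H := by
  obtain ⟨T₀, F₀, i₀, s₀, e₀, hT, hTor, hFree⟩ := tp.exists_triangle H hH
  have hi : i₀ = 0 := h T₀ hTor i₀
  obtain ⟨g, hg⟩ := Triangle.coyoneda_exact₁ _ hT (𝟙 (T₀⟦(1 : ℤ)⟧)) (by
    delta Triangle.mk; dsimp only
    rw [hi, Functor.map_zero, comp_zero])
  have hg0 : g = 0 :=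
    t.vanish_neg (t.le_iso_closed (shNeg T₀).symm (tp.torsion_mem_heart _ hTor).1)
      (tp.free_mem_heart _ hFree).2 g
  have hzT : IsZero T₀ := (isZero_shift_iff (1 : ℤ) T₀).1 (by
    rw [IsZero.iff_id_eq_zero, hg, hg0, zero_comp]; rfl)
  have : IsIso (Triangle.mk i₀ s₀ e₀).mor₂ := (Triangle.isZero₁_iff_isIso₂ _ hT).1 hzT
  exact tp.free_iso_closed (asIso (Triangle.mk i₀ s₀ e₀).mor₂).symm hFree

end HeartTorsionPair

section TiltLemmas

variable (t : TStruct C) (tp : HeartTorsionPair t)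

lemma tiltLE_of_torsion {T' : C} (hT' : tp.torsion T') : TiltLE t tp.torsion T' :=
  ⟨(tp.torsion_mem_heart _ hT').1, 0, T', 0, 𝟙 T', 0, contractible_distinguished₁ T',
    t.le_isZero ((isZero_shift_iff _ _).2 (isZero_zero C)), hT'⟩

lemma tiltLE_of_le_neg {Z : C} (hZ : t.le (Z⟦(-1 : ℤ)⟧)) : TiltLE t tp.torsion Z :=
  ⟨t.le_unshift hZ, Z, 0, 𝟙 Z, 0, 0, contractible_distinguished Z, hZ,
    tp.torsion_isZero (isZero_zero C)⟩

lemma tiltGE_shift_of_free {F : C} (hF : tp.free F) : TiltGE t tp.free (F⟦(1 : ℤ)⟧) :=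
  ⟨t.ge_iso_closed (shNeg F).symm (tp.free_mem_heart _ hF).2, F, 0, 𝟙 _, 0, 0,
    contractible_distinguished (F⟦(1 : ℤ)⟧), hF, t.ge_isZero (isZero_zero C)⟩

lemma tiltLE_iso {X Y : C} (e : X ≅ Y) (hX : TiltLE t tp.torsion X) :
    TiltLE t tp.torsion Y := by
  obtain ⟨h1, A, T, f, g, h, hd, hA, hT⟩ := hX
  refine ⟨t.le_iso_closed e h1, A, T, f ≫ e.hom, e.inv ≫ g, h,
    isomorphic_distinguished _ hd _ ?_, hA, hT⟩
  exact Triangle.isoMk _ _ (Iso.refl _) e.symm (Iso.refl _) (by simp [Triangle.mk]) (by dsimp only [Triangle.mk]; simp) (by simp [Triangle.mk])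

lemma tiltGE_iso {X Y : C} (e : X ≅ Y) (hX : TiltGE t tp.free X) :
    TiltGE t tp.free Y := by
  obtain ⟨h1, F, B, f, g, h, hd, hF, hB⟩ := hX
  refine ⟨t.ge_iso_closed ((shiftFunctor C (-1 : ℤ)).mapIso e) h1, F, B, f ≫ e.hom,
    e.inv ≫ g, h, isomorphic_distinguished _ hd _ ?_, hF, hB⟩
  exact Triangle.isoMk _ _ (Iso.refl _) e.symm (Iso.refl _) (by simp [Triangle.mk]) (by dsimp only [Triangle.mk]; simp) (by simp [Triangle.mk])

lemma tiltLE_shift {X : C} (hX : TiltLE t tp.torsion X) :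
    TiltLE t tp.torsion (X⟦(1 : ℤ)⟧) :=
  ⟨t.le_shift _ hX.1, X⟦(1 : ℤ)⟧, 0, 𝟙 _, 0, 0, contractible_distinguished _,
    t.le_iso_closed (shNeg X).symm hX.1, tp.torsion_isZero (isZero_zero C)⟩

lemma tiltGE_shift {X : C} (hX : TiltGE t tp.free X) :
    TiltGE t tp.free (X⟦(-1 : ℤ)⟧) := by
  refine ⟨t.ge_shift _ hX.1, 0, X⟦(-1 : ℤ)⟧, 0, 𝟙 _, 0,
    isomorphic_distinguished _ (contractible_distinguished₁ (X⟦(-1 : ℤ)⟧)) _ ?_,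
    tp.free_isZero (isZero_zero C), hX.1⟩
  refine Triangle.isoMk _ _ ((isZero_shift_iff _ _).2 (isZero_zero C)).isoZero
    (Iso.refl _) (Iso.refl _) ?_ ?_ ?_
  · apply ((isZero_shift_iff _ _).2 (isZero_zero C)).eq_of_src
  · rfl
  · apply ((isZero_shift_iff (1 : ℤ) (0 : C)).2 (isZero_zero C)).eq_of_tgt

/-- Hom-vanishing from the tilted `≤ 0` class to the tilted `≥ 1` class. -/
lemma tilt_vanish {X Y : C} (hX : TiltLE t tp.torsion X)
    (hY : TiltGE t tp.free (Y⟦(1 : ℤ)⟧)) (f : X ⟶ Y) : f = 0 := by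
  obtain ⟨hleX, A, T, fA, gT, h3, hdX, hAneg, hTor⟩ := hX
  obtain ⟨hgeY', F, B, fF, gB, hB, hdY, hFree, hgeB⟩ := hY
  have hgeY : t.ge Y := t.ge_iso_closed (shNeg Y) hgeY'
  have e1 : fA ≫ f = 0 := t.vanish_neg hAneg hgeY _
  obtain ⟨f', hf'⟩ := Triangle.yoneda_exact₂ _ hdX f e1
  set TYm := (Triangle.shiftFunctor C (-1 : ℤ)).obj (Triangle.mk fF gB hB) with hTYm
  have hdTYm : TYm ∈ distTriang C := Triangle.shift_distinguished _ hdY (-1)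
  have hleT : t.le T := (tp.torsion_mem_heart _ hTor).1
  set f₂ : T ⟶ (Y⟦(1 : ℤ)⟧)⟦(-1 : ℤ)⟧ := f' ≫ (shNeg Y).inv with hf₂
  have e4 : f₂ ≫ TYm.mor₂ = 0 :=
    t.hom_vanish hleT (t.ge_iso_closed (shPos B).symm hgeB) _
  obtain ⟨g₂, hg₂⟩ := Triangle.coyoneda_exact₂ _ hdTYm f₂ e4
  have hg₂0 : g₂ = 0 := by
    have h6 : g₂ ≫ (shNeg F).hom = 0 := tp.hom_vanish hTor hFree _
    have h7 : (g₂ ≫ (shNeg F).hom) ≫ (shNeg F).inv = 0 := by rw [h6, zero_comp]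
    exact ((Category.comp_id _).symm.trans ((congrArg _ (Iso.hom_inv_id _).symm).trans (Category.assoc _ _ _).symm)).trans h7
  have hf'0 : f' = 0 := by
    have : f₂ = 0 := by rw [hg₂, hg₂0, zero_comp]; rfl
    have h5 : f' ≫ (shNeg Y).inv ≫ (shNeg Y).hom = 0 := by
      rw [← Category.assoc]; exact (congrArg (fun k => k ≫ (shNeg Y).hom) (hf₂.symm.trans this)).trans zero_comp
    simpa using h5
  rw [hf', hf'0, comp_zero]; rfl

end TiltLemmas

end Auxiliary
section TiltExists

variable (t : TStruct C) (tp : HeartTorsionPair t)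

/-- Every object admits a decomposition triangle for the tilted t-structure. -/
lemma tilt_exists (X : C) :
    ∃ (A B : C) (f : A ⟶ X) (g : X ⟶ B) (h : B ⟶ A⟦(1 : ℤ)⟧),
      (Triangle.mk f g h ∈ distTriang C) ∧ TiltLE t tp.torsion A ∧
        TiltGE t tp.free (B⟦(1 : ℤ)⟧) := by
  -- Step 1: truncation of `X` at level `(-1, 0)`.
  obtain ⟨A₁, Y, a₁, x, d, hT1, hA₁, hgeY⟩ := t.exists_triangle_neg X
  -- Step 2: truncation of `Y` at level `(0, 1)`; its `≤ 0` part `H` is in the heart.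
  obtain ⟨H, B₁, hh, p₁, δ, hT2, hleH, hgeB₁⟩ := t.exists_triangle Y
  have hgeB₁' : t.ge B₁ := t.ge_unshift hgeB₁
  have hgeH : t.ge H :=
    t.ge_ext (inv_rot_of_distTriang _ hT2) (t.ge_shift _ hgeB₁') hgeY
  -- Step 3: torsion decomposition of `H`.
  obtain ⟨T, F, i, s, e₃, hT3, hTor, hFree⟩ := tp.exists_triangle H ⟨hleH, hgeH⟩
  -- Step 4: the candidate connective part `AA`, fiber of `T → A₁⟦1⟧`.
  obtain ⟨AA, ϑ, p, hT5⟩ := distinguished_cocone_triangle₂ (i ≫ hh ≫ d)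
  -- Step 5: a good map `aa : AA ⟶ X`.
  obtain ⟨aa₀, haaa₀, haax₀⟩ := complete_distinguished_triangle_morphism₂
    (Triangle.mk ϑ p (i ≫ hh ≫ d)) (Triangle.mk a₁ x d) hT5 hT1 (𝟙 A₁) (i ≫ hh)
    (by delta Triangle.mk; dsimp only; rw [CategoryTheory.Functor.map_id, Category.comp_id, Category.assoc])
  dsimp only [Triangle.mk] at haaa₀ haax₀
  rw [Category.id_comp] at haaa₀
  obtain ⟨aa, haaeq⟩ : ∃ f : AA ⟶ X, f = aa₀ := ⟨aa₀, rfl⟩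
  have haaa : ϑ ≫ aa = a₁ := by rw [haaeq]; exact haaa₀
  have haax : p ≫ i ≫ hh = aa ≫ x := by rw [haaeq]; exact haax₀
  -- `haaa : ϑ ≫ aa = a₁`, `haax : p ≫ (i ≫ hh) = aa ≫ x`  (as `mor` equations)
  -- Step 6: `Bs` is the cone of `aa`.
  obtain ⟨Bs, gs, bd, hT6⟩ := distinguished_cocone_triangle aa
  -- Step 7: `AA` lies in the tilted `≤ 0` class.
  have hleA₁ : t.le A₁ := t.le_unshift hA₁
  have hleT : t.le T := (tp.torsion_mem_heart _ hTor).1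
  have hleAA : t.le AA := t.le_ext hT5 hleA₁ hleT
  have hAA : TiltLE t tp.torsion AA := ⟨hleAA, A₁, T, ϑ, p, i ≫ hh ≫ d, hT5, hA₁, hTor⟩
  -- Step 8: all maps from the tilted `≤ 0` class to `Bs` vanish.
  have hvan : ∀ Z : C, TiltLE t tp.torsion Z → ∀ ρ : Z ⟶ Bs, ρ = 0 := by
    intro Z hZ ρ
    have hleZ : t.le Z := hZ.1
    -- Part (I): `ρ ≫ bd = 0`.
    have hσ : ρ ≫ bd = 0 := by
      set σ' : Z⟦(-1 : ℤ)⟧ ⟶ AA := (ρ ≫ bd)⟦(-1 : ℤ)⟧' ≫ (shNeg AA).hom with hσ'def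
      suffices hσ'0 : σ' = 0 by
        apply (shiftFunctor C (-1 : ℤ)).map_injective
        rw [Functor.map_zero]
        have : (ρ ≫ bd)⟦(-1 : ℤ)⟧' = σ' ≫ (shNeg AA).inv := by
          rw [hσ'def, Category.assoc, Iso.hom_inv_id, Category.comp_id]
        rw [this, hσ'0, zero_comp]
      -- `σ' ≫ aa = 0`
      have hσaa : σ' ≫ aa = 0 := by
        have hnat : (shNeg AA).hom ≫ aa = (aa⟦(1 : ℤ)⟧')⟦(-1 : ℤ)⟧' ≫ (shNeg X).hom := by
          have h := (shiftFunctorCompIsoId C (1 : ℤ) (-1 : ℤ) (by omega)).hom.naturality aa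
          exact h.symm
        have hz : bd ≫ aa⟦(1 : ℤ)⟧' = 0 := comp_distTriang_mor_zero₃₁ _ hT6
        rw [hσ'def, Category.assoc, hnat, ← Category.assoc, ← Functor.map_comp,
          Category.assoc, hz, comp_zero, Functor.map_zero, zero_comp]
      -- chase `σ'` down the filtration of `X`
      have h1 : ((σ' ≫ p) ≫ i) ≫ hh = 0 := by
        have : ((σ' ≫ p) ≫ i) ≫ hh = σ' ≫ (p ≫ (i ≫ hh)) := by
          simp only [Category.assoc]
        rw [this, haax, ← Category.assoc, hσaa, zero_comp]
      obtain ⟨χ, hχ⟩ := Triangle.coyoneda_exact₂ _ (inv_rot_of_distTriang _ hT2)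
        ((σ' ≫ p) ≫ i) h1
      have hχ0 : χ = 0 := zero_of_shift (-1) (fun g => t.hom_vanish hleZ hgeB₁ g) χ
      have h2 : (σ' ≫ p) ≫ i = 0 := hχ.trans ((congrArg (· ≫ _) hχ0).trans zero_comp)
      obtain ⟨χ₂, hχ₂⟩ := Triangle.coyoneda_exact₂ _ (inv_rot_of_distTriang _ hT3)
        (σ' ≫ p) h2
      have hχ₂0 : χ₂ = 0 := zero_of_shift (-1)
        (fun g => tilt_vanish t tp hZ (tiltGE_shift_of_free t tp hFree) g) χ₂
      have h3 : σ' ≫ p = 0 := hχ₂.trans ((congrArg (· ≫ _) hχ₂0).trans zero_comp)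
      obtain ⟨χ₃, hχ₃⟩ := Triangle.coyoneda_exact₂ _ hT5 σ' h3
      have hχ₃' : σ' = χ₃ ≫ ϑ := hχ₃
      have h4 : χ₃ ≫ a₁ = 0 := by
        rw [← haaa]; exact (Category.assoc _ _ _).symm.trans ((congrArg (· ≫ aa) hχ₃'.symm).trans hσaa)
      obtain ⟨ν, hν⟩ := Triangle.coyoneda_exact₂ _ (inv_rot_of_distTriang _ hT1) χ₃ h4
      have hT2m : (Triangle.shiftFunctor C (-1 : ℤ)).obj (Triangle.mk hh p₁ δ)
          ∈ distTriang C := Triangle.shift_distinguished _ hT2 (-1)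
      have hT3m : (Triangle.shiftFunctor C (-1 : ℤ)).obj (Triangle.mk i s e₃)
          ∈ distTriang C := Triangle.shift_distinguished _ hT3 (-1)
      have h5 : ν ≫ ((Triangle.shiftFunctor C (-1 : ℤ)).obj (Triangle.mk hh p₁ δ)).mor₂
          = 0 := zero_of_shift (-1) (fun g => t.hom_vanish hleZ hgeB₁ g) _
      obtain ⟨η, hη⟩ := Triangle.coyoneda_exact₂ _ hT2m ν h5
      -- the key octahedron-free computation
      have h6 : ((Triangle.shiftFunctor C (-1 : ℤ)).obj (Triangle.mk i s e₃)).mor₁ ≫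
          ((Triangle.shiftFunctor C (-1 : ℤ)).obj (Triangle.mk hh p₁ δ)).mor₁ ≫
          (Triangle.mk a₁ x d).invRotate.mor₁ ≫ ϑ = 0 := by
        have key := comp_distTriang_mor_zero₁₂ _ (inv_rot_of_distTriang _ hT5)
        dsimp [Triangle.invRotate, Triangle.shiftFunctor] at key ⊢; delta Triangle.mk at key ⊢; dsimp only at key ⊢
        rw [Functor.map_comp, Functor.map_comp] at key
        simp only [Preadditive.neg_comp, Preadditive.comp_neg, Category.assoc, neg_eq_zero] at key
        simp only [Linear.units_smul_comp, Linear.comp_units_smul, smul_smul,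
          Int.units_mul_self, one_smul, Preadditive.neg_comp, Preadditive.comp_neg, Category.assoc, neg_eq_zero]
        exact (congrArg (fun k => -k) ((Category.assoc _ _ _).trans ((Category.assoc _ _ _).trans ((congrArg (fun k => _ ≫ k) (Category.assoc _ _ _)).trans (congrArg (fun k => _ ≫ _ ≫ k) (Category.assoc _ _ _).symm))))).symm.trans key
      obtain ⟨w', hw'⟩ := Triangle.yoneda_exact₂ _ hT3m
        (((Triangle.shiftFunctor C (-1 : ℤ)).obj (Triangle.mk hh p₁ δ)).mor₁ ≫
          (Triangle.mk a₁ x d).invRotate.mor₁ ≫ ϑ) h6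
      have h7 : η ≫ ((Triangle.shiftFunctor C (-1 : ℤ)).obj (Triangle.mk i s e₃)).mor₂
          = 0 := zero_of_shift (-1)
        (fun g => tilt_vanish t tp hZ (tiltGE_shift_of_free t tp hFree) g) _
      rw [hχ₃', hν, hη]; exact ((Category.assoc _ _ _).trans (Category.assoc _ _ _)).trans ((congrArg (η ≫ ·) hw').trans ((Category.assoc _ _ _).symm.trans ((congrArg (· ≫ w') h7).trans
        zero_comp)))
    -- Part (II): `ρ` factors through `gs` and the factorization vanishes.
    obtain ⟨ξ₀, hξ₀⟩ := Triangle.coyoneda_exact₃ _ hT6 ρ hσ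
    obtain ⟨ξ, hξeq⟩ : ∃ f : Z ⟶ X, f = ξ₀ := ⟨ξ₀, rfl⟩
    have hξ₂ : ρ = ξ ≫ gs := by rw [hξeq]; exact hξ₀
    have d1 : (ξ ≫ x) ≫ p₁ = 0 := t.hom_vanish hleZ hgeB₁ _
    obtain ⟨η', hη'⟩ := Triangle.coyoneda_exact₂ _ hT2 (ξ ≫ x) d1
    have hη'' : ξ ≫ x = η' ≫ hh := hη' 
    have d3 : η' ≫ s = 0 := tilt_vanish t tp hZ (tiltGE_shift_of_free t tp hFree) _
    obtain ⟨τ, hτ⟩ := Triangle.coyoneda_exact₂ _ hT3 η' d3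
    have hτ' : η' = τ ≫ i := hτ
    have d4 : τ ≫ (i ≫ hh ≫ d) = 0 := by
      have : τ ≫ (i ≫ hh ≫ d) = ((τ ≫ i) ≫ hh) ≫ d := ((Category.assoc _ _ _).trans (Category.assoc _ _ _)).symm
      have hxd : x ≫ d = 0 := comp_distTriang_mor_zero₂₃ _ hT1
      rw [this, ← hτ']; exact (congrArg (· ≫ d) hη''.symm).trans ((Category.assoc _ _ _).trans ((congrArg (ξ ≫ ·) hxd).trans comp_zero))
    obtain ⟨ζ, hζ⟩ := Triangle.coyoneda_exact₃ _ hT5 τ d4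
    have hζ' : τ = ζ ≫ p := hζ
    have d6 : (ξ - ζ ≫ aa) ≫ x = 0 := by
      rw [Preadditive.sub_comp]; exact sub_eq_zero.2 (hη''.trans ((congrArg (· ≫ hh) hτ').trans ((congrArg (fun k => (k ≫ i) ≫ hh) hζ').trans
        ((Category.assoc _ _ _).trans ((Category.assoc _ _ _).trans ((congrArg (ζ ≫ ·) haax).trans (Category.assoc _ _ _).symm))))))
    obtain ⟨κ, hκ⟩ := Triangle.coyoneda_exact₂ _ hT1 (ξ - ζ ≫ aa) d6
    have hκ' : ξ - ζ ≫ aa = κ ≫ a₁ := hκ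
    have hξ' : ξ = ζ ≫ aa + κ ≫ a₁ := by
      rw [← hκ']; abel
    have haags : aa ≫ gs = 0 := comp_distTriang_mor_zero₁₂ _ hT6
    rw [hξ₂, hξ', ← haaa]
    simp only [Preadditive.add_comp, Category.assoc, haags, comp_zero, add_zero]
    exact (congrArg₂ (· + ·) ((Category.assoc _ _ _).trans ((congrArg (ζ ≫ ·) haags).trans comp_zero)) ((Category.assoc _ _ _).trans ((congrArg (κ ≫ ·) ((Category.assoc _ _ _).trans ((congrArg (ϑ ≫ ·) haags).trans comp_zero))).trans comp_zero))).trans (add_zero 0)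
  -- Step 9: `Bs` lies in the tilted `≥ 1` class.
  have hgeBs : t.ge Bs :=
    t.ge_of_homZero (fun V hV f => hvan V (tiltLE_of_le_neg t tp hV) f)
  obtain ⟨Hs, Qs, u, v, w, hT7, hleHs, hgeQs⟩ := t.exists_triangle Bs
  have hgeQs' : t.ge Qs := t.ge_unshift hgeQs
  have hgeHs : t.ge Hs :=
    t.ge_ext (inv_rot_of_distTriang _ hT7) (t.ge_shift _ hgeQs') hgeBs
  have hfreeHs : tp.free Hs := by
    refine tp.free_of_homZero ⟨hleHs, hgeHs⟩ ?_
    intro T' hT' ρ'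
    have h8 : ρ' ≫ u = 0 := hvan T' (tiltLE_of_torsion t tp hT') _
    obtain ⟨χ', hχ'⟩ := Triangle.coyoneda_exact₂ _ (inv_rot_of_distTriang _ hT7) ρ' h8
    have hχ'0 : χ' = 0 := t.hom_vanish (tp.torsion_mem_heart _ hT').1
      (t.ge_iso_closed (shPos Qs).symm hgeQs') χ'
    rw [hχ', hχ'0, zero_comp]; rfl
  -- Step 10: assemble.
  refine ⟨AA, Bs, aa, gs, bd, hT6, hAA, ?_, Hs, Qs⟦(1 : ℤ)⟧,
    ((Triangle.shiftFunctor C (1 : ℤ)).obj (Triangle.mk u v w)).mor₁,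
    ((Triangle.shiftFunctor C (1 : ℤ)).obj (Triangle.mk u v w)).mor₂,
    ((Triangle.shiftFunctor C (1 : ℤ)).obj (Triangle.mk u v w)).mor₃,
    Triangle.shift_distinguished _ hT7 1, hfreeHs, hgeQs⟩
  exact t.ge_iso_closed (shNeg Bs).symm hgeBs

end TiltExists

/-- The pair `(𝒟_υ^{≤0}, 𝒟_υ^{≥0})` obtained by tilting a t-structure `τ` at a torsion pair
`(𝒯, ℱ)` on its heart is again a t-structure: both classes are isomorphism-closed,
`𝒟_υ^{≤0}[1] ⊆ 𝒟_υ^{≤0}`, `𝒟_υ^{≥0}[-1] ⊆ 𝒟_υ^{≥0}`, `Hom(X, Y) = 0` whenever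
`X ∈ 𝒟_υ^{≤0}` and `Y ∈ 𝒟_υ^{≥0}[-1]` (i.e. `Y⟦1⟧ ∈ 𝒟_υ^{≥0}`), and every object fits in a
distinguished triangle `A → X → B → A[1]` with `A ∈ 𝒟_υ^{≤0}` and `B ∈ 𝒟_υ^{≥0}[-1]`. -/
theorem tilt_is_tStructure (t : TStruct C) (tp : HeartTorsionPair t) :
    (∀ {X Y : C}, (X ≅ Y) → TiltLE t tp.torsion X → TiltLE t tp.torsion Y) ∧
    (∀ {X Y : C}, (X ≅ Y) → TiltGE t tp.free X → TiltGE t tp.free Y) ∧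
    (∀ X : C, TiltLE t tp.torsion X → TiltLE t tp.torsion (X⟦(1 : ℤ)⟧)) ∧
    (∀ X : C, TiltGE t tp.free X → TiltGE t tp.free (X⟦(-1 : ℤ)⟧)) ∧
    (∀ {X Y : C}, TiltLE t tp.torsion X → TiltGE t tp.free (Y⟦(1 : ℤ)⟧) →
      ∀ f : X ⟶ Y, f = 0) ∧
    (∀ X : C, ∃ (A B : C) (f : A ⟶ X) (g : X ⟶ B) (h : B ⟶ A⟦(1 : ℤ)⟧),
      (Triangle.mk f g h ∈ distTriang C) ∧ TiltLE t tp.torsion A ∧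
        TiltGE t tp.free (B⟦(1 : ℤ)⟧)) :=
  ⟨fun e hX => tiltLE_iso t tp e hX, fun e hX => tiltGE_iso t tp e hX,
    fun _ hX => tiltLE_shift t tp hX, fun _ hX => tiltGE_shift t tp hX,
    fun hX hY f => tilt_vanish t tp hX hY f, fun X => tilt_exists t tp X⟩
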